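/- Let H be a complex Hilbert space, let P : H → H be a bounded self-adjoint operator, and let h > 0 and t ∈ ℝ. Define the unitary propagator U(t) := exp(−(it/h) P) (the operator exponential of −(it/h)P). Then for every u ∈ H one has ‖U(t)u − e^{−it/h} u‖ ≤ (|t|/h) ‖P u − u‖, where e^{−it/h} ∈ ℂ is the scalar complex exponential. -/

import Mathlib

open NormedSpace

theorem propagator_close_to_phase
    {H : Type*} [NormedAddCommGroup H] [InnerProductSpace ℂ H] [CompleteSpace H]
    (P : H →L[ℂ] H) (hP : IsSelfAdjoint P)
    (h t : ℝ) (hh : 0 < h) (u : H) :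
    ‖(NormedSpace.exp (((-(t / h) : ℂ) * Complex.I) • P)) u
        - Complex.exp ((-(t / h) : ℂ) * Complex.I) • u‖
      ≤ (|t| / h) * ‖P u - u‖ := by
  let +nondep : NormedAlgebra ℚ (H →L[ℂ] H) := .restrictScalars ℚ ℂ (H →L[ℂ] H)
  set A : H →L[ℂ] H := P - 1 with hA
  have hAsa : IsSelfAdjoint A := hP.sub (IsSelfAdjoint.one _)
  set r : ℝ := -(t / h) with hr
  have hc : ((r : ℂ) * Complex.I) • P
      = ((r : ℂ) * Complex.I) • (1 : H →L[ℂ] H) + ((r : ℂ) * Complex.I) • A := by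
    rw [← smul_add]; congr 1; simp [hA]
  -- exp of central part
  have h1 : exp (((r : ℂ) * Complex.I) • (1 : H →L[ℂ] H))
      = Complex.exp ((r : ℂ) * Complex.I) • (1 : H →L[ℂ] H) := by
    have := algebraMap_exp_comm (𝕂 := ℂ) (𝔸 := H →L[ℂ] H) ((r : ℂ) * Complex.I)
    rw [Algebra.algebraMap_eq_smul_one, Algebra.algebraMap_eq_smul_one] at this
    rw [← this, Complex.exp_eq_exp_ℂ]
  have hsplit : exp (((r : ℂ) * Complex.I) • P)
      = Complex.exp ((r : ℂ) * Complex.I) • exp (((r : ℂ) * Complex.I) • A) := by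
    rw [hc, exp_add_of_commute]
    · rw [h1, smul_mul_assoc, one_mul]
    · exact (Commute.one_left A).smul_left _ |>.smul_right _
  -- unitarity of exp of skew-adjoint
  have hunit : ∀ s : ℝ, ∀ v : H,
      ‖(exp (((s : ℂ) * Complex.I) • A)) v‖ = ‖v‖ := by
    intro s v
    apply ContinuousLinearMap.norm_map_of_mem_unitary
    apply exp_mem_unitary_of_mem_skewAdjoint
    rw [skewAdjoint.mem_iff]
    rw [star_smul, hAsa.star_eq]
    simp only [star_mul', Complex.star_def, Complex.conj_I, Complex.conj_ofReal]
    rw [mul_neg, neg_smul]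
  -- derivative of g s = exp ((s*I) • A) u
  set g : ℝ → H := fun s => (exp (((s : ℂ) * Complex.I) • A)) u with hg
  have hderiv : ∀ s : ℝ, HasDerivAt g
      (Complex.I • ((exp (((s : ℂ) * Complex.I) • A) * A) u)) s := by
    intro s
    have hpath : HasDerivAt (fun s : ℝ => (s : ℂ) * Complex.I) Complex.I s := by
      simpa using (Complex.ofRealCLM.hasDerivAt (x := s)).mul_const Complex.I
    have hexp : HasDerivAt (fun z : ℂ => exp (z • A))
        (exp (((s : ℂ) * Complex.I) • A) * A) ((s : ℂ) * Complex.I) :=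
      hasDerivAt_exp_smul_const A ((s : ℂ) * Complex.I)
    have hexpu : HasDerivAt (fun z : ℂ => (exp (z • A)) u)
        ((exp (((s : ℂ) * Complex.I) • A) * A) u) ((s : ℂ) * Complex.I) := by
      have := (ContinuousLinearMap.apply ℂ H u).hasFDerivAt.comp_hasDerivAt
        ((s : ℂ) * Complex.I) hexp
      simpa [Function.comp_def] using this
    exact HasDerivAt.scomp s hexpu hpath
  -- mean value inequality on univ
  have key : ‖g r - g 0‖ ≤ ‖A u‖ * ‖r - (0 : ℝ)‖ := by
    refine Convex.norm_image_sub_le_of_norm_hasDerivWithin_le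
      (f := g) (f' := fun s : ℝ => Complex.I • ((exp (((s : ℂ) * Complex.I) • A) * A) u))
      (s := Set.univ) (fun s _ => (hderiv s).hasDerivWithinAt) ?_ convex_univ trivial trivial
    intro s _
    rw [norm_smul]
    simp only [Complex.norm_I, one_mul]
    rw [ContinuousLinearMap.mul_apply]
    exact le_of_eq (hunit s (A u))
  have hg0 : g 0 = u := by simp [hg]
  have hAu : A u = P u - u := by simp [hA]
  have habs : ‖Complex.exp ((r : ℂ) * Complex.I)‖ = 1 := by
    rw [Complex.norm_exp]; simp
  have hcast : ((r : ℝ) : ℂ) = (-(t / h) : ℂ) := by push_cast [hr]; ring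
  rw [← hcast, hsplit, ContinuousLinearMap.smul_apply, ← smul_sub, norm_smul,
    habs, one_mul]
  rw [hg0] at key
  refine le_trans key (le_of_eq ?_)
  rw [hAu, sub_zero, Real.norm_eq_abs, hr, abs_neg, abs_div, abs_of_pos hh, mul_comm]
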